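/- arXiv:0901.4349 — 6 statements merged into one kernel-verified Lean document; each statement's English description precedes it below -/
import Mathlib

section
/- For every natural number n ≥ 1, every complex root t of the polynomial r (n+1) − r n satisfies |t| < 1/2. -/
open Polynomial

/-- The polynomials `r k ∈ ℤ[X]` defined by `r 0 = 0`, `r 1 = 1`,
`r (k+2) = (1 - 2X) r (k+1) + X r k`. -/
noncomputable def r : ℕ → Polynomial ℤ
  | 0 => 0
  | 1 => 1
  | (k + 2) => (1 - 2 * X) * r (k + 1) + X * r k

lemma aeval_r_rec (t : ℂ) (k : ℕ) :
    aeval t (r (k+2)) = (1 - 2*t) * aeval t (r (k+1)) + t * aeval t (r k) := by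
  rw [show r (k+2) = (1 - 2 * X) * r (k + 1) + X * r k from rfl]
  simp only [map_add, map_mul, map_sub, map_one, map_ofNat, aeval_X]

/-- Closed-form identity after the substitution `t = u/(u²-1)`. -/
lemma keyId (t u : ℂ) (htu : t * (u^2 - 1) = u) :
    ∀ n : ℕ, (aeval t (r n)) * (1 + u^2) * (1 - u^2)^n
      = (1 - u^2) * ((1+u)^n - u^n * (1-u)^n) := by
  have main : ∀ n : ℕ, ((aeval t (r n)) * (1 + u^2) * (1 - u^2)^n
      = (1 - u^2) * ((1+u)^n - u^n * (1-u)^n)) ∧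
      ((aeval t (r (n+1))) * (1 + u^2) * (1 - u^2)^(n+1)
      = (1 - u^2) * ((1+u)^(n+1) - u^(n+1) * (1-u)^(n+1))) := by
    intro n
    induction n with
    | zero =>
      constructor
      · simp [r]
      · show (aeval t (r 1)) * _ * _ = _
        rw [show r 1 = 1 from rfl]
        simp only [map_one, one_mul, pow_one]
        ring
    | succ k ih =>
      refine ⟨ih.2, ?_⟩
      rw [aeval_r_rec]
      obtain ⟨h0, h1⟩ := ih
      have h2 : t * (1 - u^2) = -u := by linear_combination -htu
      linear_combination (1 + 2*u - u^2) * h1 + (-u * (1-u^2)) * h0 +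
        ((-2 * (aeval t (r (k+1))) + (aeval t (r k))) * (1+u^2) * (1-u^2)^(k+1)) * h2
  exact fun n => (main n).1

/-- Closed form in the degenerate (double eigenvalue) case. -/
lemma degId (t a : ℂ) (h1 : 1 - 2*t = 2*a) (h2 : t = -a^2) :
    ∀ n : ℕ, aeval t (r n) * a = n * a^n := by
  have main : ∀ n : ℕ, (aeval t (r n) * a = n * a^n) ∧
      (aeval t (r (n+1)) * a = (n+1) * a^(n+1)) := by
    intro n
    induction n with
    | zero =>
      refine ⟨by simp [r], ?_⟩
      show (aeval t (r 1)) * a = _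
      rw [show r 1 = 1 from rfl]
      simp
    | succ k ih =>
      obtain ⟨h0, h1'⟩ := ih
      refine ⟨by exact_mod_cast h1', ?_⟩
      rw [aeval_r_rec]
      push_cast
      linear_combination ((aeval t (r (k+1))) * a) * h1 +
        ((aeval t (r k)) * a) * h2 + 2*a*h1' + (-a^2)*h0
  exact fun n => (main n).1

set_option maxHeartbeats 800000 in
/-- The analytic heart: the modulus condition coming from the root equation
forces `|t| < 1/2`. -/
lemma absArg (n : ℕ) (hn : 1 ≤ n) (t u : ℂ) (ht0 : t ≠ 0)
    (htu : t * (u^2 - 1) = u) (hu1 : ‖u‖ ≤ 1) (hu2 : u^2 ≠ -1)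
    (hE : u*(1+u)^(n+1) + u^n*(1-u)^(n+1) = 0) :
    ‖t‖ < 1/2 := by
  have h1u : (1:ℂ) - u^2 ≠ 0 := by
    intro h
    have hu : u = 0 := by
      have : t * (u^2 - 1) = 0 := by rw [show u^2 - 1 = -(1 - u^2) by ring, h]; ring
      rw [htu] at this; exact this
    rw [hu] at h; norm_num at h
  have hune : u ≠ 0 := by
    intro h
    apply ht0
    rw [h] at htu
    simpa using htu.symm
  set x := ‖u‖ with hxdef
  set P := ‖1+u‖ with hPdef
  set Q := ‖1-u‖ with hQdef
  have hx0 : 0 < x := norm_pos_iff.mpr hune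
  have hP0 : 0 < P := by
    refine norm_pos_iff.mpr (fun h => h1u ?_)
    rw [show u = -1 by linear_combination h]; ring
  have hQ0 : 0 < Q := by
    refine norm_pos_iff.mpr (fun h => h1u ?_)
    rw [show u = 1 by linear_combination -h]; ring
  have hx2 : x^2 = u.re^2 + u.im^2 := by
    rw [hxdef, Complex.sq_norm, Complex.normSq_apply]; ring
  have hP2 : P^2 = 1 + 2*u.re + x^2 := by
    rw [hPdef, Complex.sq_norm, Complex.normSq_apply]
    simp only [Complex.add_re, Complex.add_im, Complex.one_re, Complex.one_im]
    linarith [hx2]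
  have hQ2 : Q^2 = 1 - 2*u.re + x^2 := by
    rw [hQdef, Complex.sq_norm, Complex.normSq_apply]
    simp only [Complex.sub_re, Complex.sub_im, Complex.one_re, Complex.one_im]
    linarith [hx2]
  have hEabs : x * P^(n+1) = x^n * Q^(n+1) := by
    have h1 : u*(1+u)^(n+1) = -(u^n*(1-u)^(n+1)) := by linear_combination hE
    have := congrArg (‖·‖) h1
    simpa [norm_mul, norm_pow, norm_neg, hxdef, hPdef, hQdef] using this
  have htabs : ‖t‖ * (Q*P) = x := by
    have h1 : t * (-( (1-u) * (1+u) )) = u := by linear_combination htu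
    have := congrArg (‖·‖) h1
    simpa [norm_mul, norm_neg, hxdef, hPdef, hQdef, mul_assoc] using this
  by_contra hcon
  push_neg at hcon
  have hA : Q * P ≤ 2 * x := by
    nlinarith [htabs, hcon, mul_pos hQ0 hP0]
  have hxn : x^n ≤ x := by
    calc x^n ≤ x^1 := pow_le_pow_of_le_one hx0.le hu1 hn
    _ = x := pow_one x
  have hPQ : P ≤ Q := by
    have h1 : x * P^(n+1) ≤ x * Q^(n+1) := by
      rw [hEabs]
      exact mul_le_mul_of_nonneg_right hxn (by positivity)
    exact le_of_pow_le_pow_left₀ (Nat.succ_ne_zero n) hQ0.le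
      (le_of_mul_le_mul_left h1 hx0)
  have hc0 : u.re ≤ 0 := by nlinarith [hPQ, hP0, hQ0]
  have hA2 : (Q*P)^2 ≤ (2*x)^2 := by nlinarith [hA, hx0, mul_pos hQ0 hP0]
  have hPQe : (Q*P)^2 = (1 + x^2)^2 - 4*u.re^2 := by
    linear_combination P^2 * hQ2 + (1-2*u.re+x^2) * hP2
  have hc4 : 4*u.re^2 ≥ (1-x^2)^2 := by nlinarith [hA2, hPQe]
  have hc2 : -2*u.re ≥ 1 - x^2 := by nlinarith [hc0, hc4, hu1, hx0]
  have hQ2' : Q^2 ≥ 2 := by linarith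
  have hP2' : P^2 ≤ 2*x^2 := by linarith
  have hx1 : x = 1 := by
    have e1 : (x^2)^n * (Q^2)^(n+1) = (x^n * Q^(n+1))^2 := by ring
    have e2 : x^2 * (P^2)^(n+1) = (x * P^(n+1))^2 := by ring
    have e3 : x^2 * (2*x^2)^(n+1) = 2^(n+1) * ((x^2)^n * x^4) := by ring
    have h2n : 2^(n+1) * (x^2)^n ≤ 2^(n+1) * ((x^2)^n * x^4) := by
      calc 2^(n+1) * (x^2)^n = (x^2)^n * 2^(n+1) := by ring
      _ ≤ (x^2)^n * (Q^2)^(n+1) :=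
          mul_le_mul_of_nonneg_left (pow_le_pow_left₀ (by norm_num) hQ2' (n+1)) (by positivity)
      _ = (x^n * Q^(n+1))^2 := e1
      _ = (x * P^(n+1))^2 := by rw [hEabs]
      _ = x^2 * (P^2)^(n+1) := e2.symm
      _ ≤ x^2 * (2*x^2)^(n+1) :=
          mul_le_mul_of_nonneg_left (pow_le_pow_left₀ (by positivity) hP2' (n+1)) (by positivity)
      _ = 2^(n+1) * ((x^2)^n * x^4) := e3
    have h4 : (x^2)^n ≤ (x^2)^n * x^4 :=
      le_of_mul_le_mul_left h2n (by positivity)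
    have hpos : (0:ℝ) < (x^2)^n := by positivity
    have h5 : (x^2)^n * 1 ≤ (x^2)^n * x^4 := by linarith
    have hx4 : (1:ℝ) ≤ x^4 := le_of_mul_le_mul_left h5 hpos
    have hx4' : x^4 ≤ 1 := pow_le_one₀ hx0.le hu1
    have : x^4 = 1 := le_antisymm hx4' hx4
    nlinarith [this, hx0, hu1]
  have hre : u.re = 0 := by
    have hPQ2 : P^(n+1) = Q^(n+1) := by
      have h := hEabs
      rw [hx1, one_mul, one_pow, one_mul] at h
      exact h
    have hpq : P = Q := le_antisymm hPQ
      (le_of_pow_le_pow_left₀ (Nat.succ_ne_zero n) hP0.le (le_of_eq hPQ2.symm))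
    nlinarith [hP2, hQ2, hpq]
  have him : u.im^2 = 1 := by
    have h := hx2
    rw [hx1, hre] at h
    nlinarith [h]
  apply hu2
  apply Complex.ext
  · rw [sq, Complex.mul_re, hre]
    simp only [Complex.neg_re, Complex.one_re, mul_zero, zero_sub]
    linear_combination -him
  · rw [sq, Complex.mul_im, hre]
    simp

/-- For `n ≥ 1`, every complex root of `r (n+1) - r n` lies strictly inside the
circle `|t| = 1/2`. -/
theorem roots_inside (n : ℕ) (hn : 1 ≤ n) (t : ℂ)
    (ht : Polynomial.aeval t (r (n + 1) - r n) = 0) :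
    ‖t‖ < 1 / 2 := by
  by_cases ht0 : t = 0
  · rw [ht0]; norm_num
  -- get `u` with `t = u/(u²-1)` and `|u| ≤ 1`
  obtain ⟨u, htu, hu1⟩ : ∃ u : ℂ, t * (u^2 - 1) = u ∧ ‖u‖ ≤ 1 := by
    obtain ⟨s, hs⟩ : ∃ s : ℂ, s^2 = 1 + 4*t^2 :=
      ⟨(1+4*t^2) ^ ((2:ℕ):ℂ)⁻¹, Complex.cpow_nat_inv_pow _ (by norm_num)⟩
    set v : ℂ := (1 + s)/(2*t) with hv
    have hvt : t * (v^2 - 1) = v := by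
      rw [hv]
      field_simp
      linear_combination hs
    have hvne : v ≠ 0 := by
      intro h
      apply ht0
      rw [h] at hvt
      simpa using hvt
    rcases le_or_gt ‖v‖ 1 with h | h
    · exact ⟨v, hvt, h⟩
    · refine ⟨-1/v, ?_, ?_⟩
      · field_simp
        linear_combination (-1) * hvt
      · rw [neg_div, norm_neg, norm_div, norm_one]
        rw [div_le_one (by positivity)]
        exact h.le
  -- the two values agree
  have hA : aeval t (r (n+1)) = aeval t (r n) := by
    rw [map_sub, sub_eq_zero] at ht
    exact ht
  have h1u : (1:ℂ) - u^2 ≠ 0 := by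
    intro h
    have hu : u = 0 := by
      have : t * (u^2 - 1) = 0 := by rw [show u^2 - 1 = -(1 - u^2) by ring, h]; ring
      rw [htu] at this; exact this
    rw [hu] at h; norm_num at h
  -- consequence of the key identity
  have hE : u*(1+u)^(n+1) + u^n*(1-u)^(n+1) = 0 := by
    have K1 := keyId t u htu (n+1)
    have K0 := keyId t u htu n
    have hK : (1-u^2) * ((1+u)^(n+1) - u^(n+1)*(1-u)^(n+1))
        = (1-u^2) * ((1-u^2) * ((1+u)^n - u^n*(1-u)^n)) := by
      calc (1-u^2) * ((1+u)^(n+1) - u^(n+1)*(1-u)^(n+1))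
          = aeval t (r (n+1)) * (1+u^2) * (1-u^2)^(n+1) := K1.symm
        _ = (aeval t (r n) * (1+u^2) * (1-u^2)^n) * (1-u^2) := by
            rw [hA, pow_succ]; ring
        _ = (1-u^2) * ((1-u^2) * ((1+u)^n - u^n*(1-u)^n)) := by rw [K0]; ring
    have hX := mul_left_cancel₀ h1u hK
    linear_combination hX
  by_cases hu2 : u^2 = -1
  · -- degenerate case: double eigenvalue, `t = ∓ i/2` is not a root
    exfalso
    set a : ℂ := (1+u)/2 with ha
    have hu2t : u = -2*t := by linear_combination -htu + t*hu2
    have hd1 : 1 - 2*t = 2*a := by rw [ha]; linear_combination -hu2t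
    have hd2 : t = -a^2 := by
      rw [ha]
      field_simp
      linear_combination hu2 + 2*hu2t
    have D1 := degId t a hd1 hd2 (n+1)
    have D0 := degId t a hd1 hd2 n
    have ha0 : a ≠ 0 := by
      intro h
      rw [h] at hd2
      apply ht0
      rw [hd2]; ring
    have heq : ((n:ℂ)+1) * a^(n+1) = (n:ℂ) * a^n := by
      push_cast at D1
      rw [← D1, hA, D0]
    have h' : (((n:ℂ)+1) * a) * a^n = (n:ℂ) * a^n := by
      linear_combination heq
    have hna : ((n:ℂ)+1) * a = (n:ℂ) := mul_right_cancel₀ (pow_ne_zero n ha0) h'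
    have hnu : ((n:ℂ)+1) * u = (n:ℂ) - 1 := by
      rw [ha] at hna
      field_simp at hna
      linear_combination hna
    have hq : 2*(n:ℂ)^2 + 2 = 0 := by
      have h2 : (((n:ℂ)+1) * u)^2 = ((n:ℂ) - 1)^2 := by rw [hnu]
      linear_combination -h2 + ((n:ℂ)+1)^2 * hu2
    have hq' : ((2*n^2+2 : ℕ) : ℂ) = 0 := by push_cast; linear_combination hq
    have hN : 2*n^2+2 = 0 := by exact_mod_cast hq'
    exact (by positivity : 0 < 2*n^2+2).ne' hN
  · exact absArg n hn t u ht0 htu hu1 hu2 hE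
end

section
/- For every natural number n ≥ 1, every complex root t of the polynomial r (n+1) + 2·X · r n satisfies |t| > 1/2. -/
open Polynomial

private lemma key_real (x y u v : ℝ) (h1 : x^2 - y^2 = 1 + 4*u^2 - 4*v^2)
    (h2 : x*y = 4*(u*v)) (h3 : u^2 + v^2 ≤ 1/4) :
    4*(x*u + y*v)^2 ≤ x^2 := by
  have hid : x^2 - 4*(x*u + y*v)^2 = (1 - 4*u^2 - 4*v^2)*(x^2 + 4*v^2) := by
    linear_combination 4*v^2*h1 - 8*u*v*h2
  nlinarith [sq_nonneg x, sq_nonneg v]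

private lemma tri (n : ℕ) (hn : n ≠ 0) (P Q R Sq x y u v : ℝ)
    (hPnn : 0 ≤ P) (hQnn : 0 ≤ Q) (hRnn : 0 ≤ R) (hSnn : 0 ≤ Sq)
    (hprodP : 0 < P * Q) (hprodR : 0 < R * Sq)
    (hE2 : P^n * Sq = Q^n * R)
    (hPc : P = (1-2*u+x)^2 + (y-2*v)^2)
    (hQc : Q = (1-2*u-x)^2 + (y+2*v)^2)
    (hRc : R = (1+2*u-x)^2 + (2*v-y)^2)
    (hSc : Sq = (1+2*u+x)^2 + (2*v+y)^2)
    (h1 : x^2 - y^2 = 1 + 4*u^2 - 4*v^2)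
    (h2 : x*y = 4*(u*v))
    (h3 : u^2 + v^2 ≤ 1/4)
    (hxy : ¬(x = 0 ∧ y = 0)) : False := by
  have hkey := key_real x y u v h1 h2 h3
  have hsign : (P - Q) * (R - Sq) ≤ 0 := by
    have hid : (P - Q) * (R - Sq) = -16*(x^2 - 4*(x*u+y*v)^2) := by
      rw [hPc, hQc, hRc, hSc]; ring
    rw [hid]; linarith
  rcases lt_trichotomy P Q with h | h | h
  · have hRgeS : Sq ≤ R := by
      by_contra hc
      push_neg at hc
      have := mul_pos_of_neg_of_neg (by linarith : P - Q < 0) (by linarith : R - Sq < 0)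
      linarith
    have hSpos : 0 < Sq := by
      rcases hSnn.lt_or_eq with hp | hp
      · exact hp
      · exfalso; rw [← hp, mul_zero] at hprodR; exact lt_irrefl _ hprodR
    have hpow : P^n < Q^n := pow_lt_pow_left₀ h hPnn hn
    have c1 : Q^n * Sq ≤ Q^n * R := mul_le_mul_of_nonneg_left hRgeS (pow_nonneg hQnn n)
    have c2 : P^n * Sq < Q^n * Sq := mul_lt_mul_of_pos_right hpow hSpos
    linarith
  · have hPpos : 0 < P := by
      rcases hPnn.lt_or_eq with hp | hp
      · exact hp
      · exfalso; rw [← hp, zero_mul] at hprodP; exact lt_irrefl _ hprodP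
    have hReqS : R = Sq := by
      have hp : (0:ℝ) < P^n := pow_pos hPpos n
      rw [← h] at hE2
      exact (mul_left_cancel₀ (ne_of_gt hp) hE2).symm
    have e1' : (1-2*u+x)^2 + (y-2*v)^2 - ((1-2*u-x)^2 + (y+2*v)^2) = 0 := by
      rw [← hPc, ← hQc]; linarith
    have e2' : (1+2*u-x)^2 + (2*v-y)^2 - ((1+2*u+x)^2 + (2*v+y)^2) = 0 := by
      rw [← hRc, ← hSc]; linarith
    have hx0 : x = 0 := by linear_combination e1'/8 - e2'/8
    have hy0 : y ≠ 0 := fun h0y => hxy ⟨hx0, h0y⟩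
    have hyv : y*v = 0 := by linear_combination -e1'/8 + (1/2 - u)*hx0
    have hv0 : v = 0 := (mul_eq_zero.mp hyv).resolve_left hy0
    rw [hx0, hv0] at h1
    linarith [sq_nonneg y, sq_nonneg u, h1]
  · have hRleS : R ≤ Sq := by
      by_contra hc
      push_neg at hc
      have := mul_pos (by linarith : 0 < P - Q) (by linarith : 0 < R - Sq)
      linarith
    have hRpos : 0 < R := by
      rcases hRnn.lt_or_eq with hp | hp
      · exact hp
      · exfalso; rw [← hp, zero_mul] at hprodR; exact lt_irrefl _ hprodR
    have hpow : Q^n < P^n := pow_lt_pow_left₀ h hQnn hn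
    have c1 : P^n * R ≤ P^n * Sq := mul_le_mul_of_nonneg_left hRleS (pow_nonneg hPnn n)
    have c2 : Q^n * R < P^n * R := mul_lt_mul_of_pos_right hpow hRpos
    linarith

private lemma core (t : ℂ) (S : ℕ → ℂ) (hS0 : S 0 = 0) (hS1 : S 1 = 1)
    (hrec : ∀ k, S (k+2) = (1-2*t)*S (k+1) + t*S k)
    (n : ℕ) (hn : 1 ≤ n) (h0 : S (n+1) + 2*t*S n = 0) :
    1/2 < ‖t‖ := by
  by_contra hle
  push_neg at hle
  have hnsq : Complex.normSq t ≤ 1/4 := by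
    have h := Complex.sq_norm t
    nlinarith [norm_nonneg t]
  have ht0 : t ≠ 0 := by
    rintro rfl
    have hone : ∀ k, S (k+1) = 1 := by
      intro k
      induction k with
      | zero => exact hS1
      | succ m ih => rw [hrec m, ih]; ring
    rw [hone n] at h0
    simp at h0
  obtain ⟨d, hd⟩ := IsAlgClosed.exists_pow_nat_eq (1 + 4*t^2) (n := 2) (by norm_num)
  by_cases hd0 : d = 0
  · -- degenerate case : 1 + 4 t² = 0
    have h40 : 1 + 4*t^2 = 0 := by rw [← hd, hd0]; ring
    have hl2 : ((1 - 2*t)/2)^2 = -t := by linear_combination h40/4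
    have hl0 : ((1:ℂ) - 2*t)/2 ≠ 0 := by
      intro h
      rw [h] at hl2
      exact ht0 (by linear_combination hl2)
    have hform : ∀ k : ℕ, S (k+1) = ((k:ℂ)+1) * ((1 - 2*t)/2)^k ∧
        S (k+2) = ((k:ℂ)+2) * ((1 - 2*t)/2)^(k+1) := by
      intro k
      induction k with
      | zero =>
        refine ⟨by simpa using hS1, ?_⟩
        rw [hrec 0, hS0, hS1]
        push_cast
        ring
      | succ m ih =>
        obtain ⟨ih1, ih2⟩ := ih
        have ih2' : S (m+1+1) = ((m:ℂ)+2) * ((1 - 2*t)/2)^(m+1) := ih2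
        constructor
        · rw [ih2']; push_cast; ring
        · rw [hrec (m+1), ih2', ih1]
          push_cast
          linear_combination (((m:ℂ)+1) * ((1-2*t)/2)^m) * hl2
    obtain ⟨m, rfl⟩ : ∃ m, n = m + 1 := ⟨n-1, by omega⟩
    obtain ⟨hf1, hf2⟩ := hform m
    rw [hf2, hf1] at h0
    have hpow : ((1 - 2*t)/2)^m ≠ 0 := pow_ne_zero _ hl0
    have heq : ((m:ℂ)+2) * ((1 - 2*t)/2) + 2*t*((m:ℂ)+1) = 0 := by
      have hfac : ((1 - 2*t)/2)^m * (((m:ℂ)+2) * ((1 - 2*t)/2) + 2*t*((m:ℂ)+1)) = 0 := by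
        linear_combination h0
      rcases mul_eq_zero.mp hfac with h | h
      · exact absurd h hpow
      · exact h
    have hti : (2*t - Complex.I) * (2*t + Complex.I) = 0 := by
      linear_combination h40 - Complex.I_sq
    rcases mul_eq_zero.mp hti with h | h
    · have htI : t = Complex.I/2 := by linear_combination h/2
      have key : ((m:ℂ)+2) + (m:ℂ)*Complex.I = 0 := by
        linear_combination 2*heq - 2*(m:ℂ)*htI
      have hre := congrArg Complex.re key
      simp [Complex.add_re, Complex.mul_re] at hre
      nlinarith [hre, (Nat.cast_nonneg m : (0:ℝ) ≤ m)]
    · have htI : t = -Complex.I/2 := by linear_combination h/2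
      have key : ((m:ℂ)+2) - (m:ℂ)*Complex.I = 0 := by
        linear_combination 2*heq - 2*(m:ℂ)*htI
      have hre := congrArg Complex.re key
      simp [Complex.sub_re, Complex.add_re, Complex.mul_re] at hre
      nlinarith [hre, (Nat.cast_nonneg m : (0:ℝ) ≤ m)]
  · -- main case : distinct characteristic roots
    have hform2 : ∀ k : ℕ, (2:ℂ)^k * d * S k = (1-2*t+d)^k - (1-2*t-d)^k ∧
        (2:ℂ)^(k+1) * d * S (k+1) = (1-2*t+d)^(k+1) - (1-2*t-d)^(k+1) := by
      intro k
      induction k with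
      | zero =>
        constructor
        · rw [hS0]; ring
        · rw [hS1]; ring
      | succ m ih =>
        obtain ⟨i1, i2⟩ := ih
        have i2' : (2:ℂ)^(m+1) * d * S (m+1) = (1-2*t+d)^(m+1) - (1-2*t-d)^(m+1) := i2
        refine ⟨i2', ?_⟩
        rw [hrec m]
        linear_combination 4*t*i1 + 2*(1-2*t)*i2' - ((1-2*t+d)^m - (1-2*t-d)^m)*hd
    have e1 := (hform2 n).1
    have e2 := (hform2 n).2
    have hE : (1-2*t+d)^n * (2 - (1-2*t-d)) = (1-2*t-d)^n * (2 - (1-2*t+d)) := by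
      linear_combination -e2 - 4*t*e1 + 2^(n+1)*d*h0
    have hE2 := congrArg Complex.normSq hE
    rw [map_mul, map_mul, map_pow, map_pow] at hE2
    have h1 : d.re^2 - d.im^2 = 1 + 4*t.re^2 - 4*t.im^2 := by
      have hh := congrArg Complex.re hd
      simp [pow_two, Complex.mul_re, Complex.add_re, Complex.one_re,
        Complex.mul_im, Complex.re_ofNat, Complex.im_ofNat] at hh
      linear_combination hh
    have h2 : d.re*d.im = 4*(t.re*t.im) := by
      have hh := congrArg Complex.im hd
      simp [pow_two, Complex.mul_im, Complex.add_im, Complex.one_im,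
        Complex.mul_re, Complex.re_ofNat, Complex.im_ofNat] at hh
      linear_combination hh/2
    have h3 : t.re^2 + t.im^2 ≤ 1/4 := by
      have hns : Complex.normSq t = t.re*t.re + t.im*t.im := Complex.normSq_apply t
      nlinarith [hnsq]
    have hntpos : 0 < Complex.normSq t := Complex.normSq_pos.mpr ht0
    have hprodP : 0 < Complex.normSq (1-2*t+d) * Complex.normSq (1-2*t-d) := by
      rw [← map_mul]
      have hAB : ((1:ℂ)-2*t+d) * (1-2*t-d) = -(4*t) := by linear_combination -hd
      rw [hAB]
      exact Complex.normSq_pos.mpr (by simpa using ht0)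
    have hprodR : 0 < Complex.normSq (2-(1-2*t+d)) * Complex.normSq (2-(1-2*t-d)) := by
      rw [← map_mul]
      have hAB : ((2:ℂ) - (1-2*t+d)) * (2 - (1-2*t-d)) = 4*t := by linear_combination -hd
      rw [hAB]
      exact Complex.normSq_pos.mpr (by simpa using ht0)
    have hPc : Complex.normSq (1-2*t+d) = (1-2*t.re+d.re)^2 + (d.im-2*t.im)^2 := by
      simp [Complex.normSq_apply, Complex.add_re, Complex.sub_re, Complex.add_im,
        Complex.sub_im, Complex.mul_re, Complex.mul_im, Complex.one_re, Complex.one_im,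
        Complex.re_ofNat, Complex.im_ofNat]
      ring
    have hQc : Complex.normSq (1-2*t-d) = (1-2*t.re-d.re)^2 + (d.im+2*t.im)^2 := by
      simp [Complex.normSq_apply, Complex.add_re, Complex.sub_re, Complex.add_im,
        Complex.sub_im, Complex.mul_re, Complex.mul_im, Complex.one_re, Complex.one_im,
        Complex.re_ofNat, Complex.im_ofNat]
      ring
    have hRc : Complex.normSq (2-(1-2*t+d)) = (1+2*t.re-d.re)^2 + (2*t.im-d.im)^2 := by
      simp [Complex.normSq_apply, Complex.add_re, Complex.sub_re, Complex.add_im,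
        Complex.sub_im, Complex.mul_re, Complex.mul_im, Complex.one_re, Complex.one_im,
        Complex.re_ofNat, Complex.im_ofNat]
      ring
    have hSc : Complex.normSq (2-(1-2*t-d)) = (1+2*t.re+d.re)^2 + (2*t.im+d.im)^2 := by
      simp [Complex.normSq_apply, Complex.add_re, Complex.sub_re, Complex.add_im,
        Complex.sub_im, Complex.mul_re, Complex.mul_im, Complex.one_re, Complex.one_im,
        Complex.re_ofNat, Complex.im_ofNat]
      ring
    have hxy : ¬(d.re = 0 ∧ d.im = 0) := by
      rintro ⟨a, b⟩
      exact hd0 (by apply Complex.ext <;> simp [a, b])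
    exact tri n (by omega) _ _ _ _ d.re d.im t.re t.im
      (Complex.normSq_nonneg _) (Complex.normSq_nonneg _)
      (Complex.normSq_nonneg _) (Complex.normSq_nonneg _)
      hprodP hprodR hE2 hPc hQc hRc hSc h1 h2 h3 hxy

/-- For `n ≥ 1`, every complex root of `r (n+1) + 2X · r n` lies strictly outside
the circle `|t| = 1/2`. -/
theorem roots_outside (n : ℕ) (hn : 1 ≤ n) (t : ℂ)
    (ht : Polynomial.aeval t (r (n + 1) + 2 * X * r n) = 0) :
    1 / 2 < ‖t‖ := by
  apply core t (fun k => aeval t (r k))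
  · simp [r]
  · simp [r]
  · intro k
    rw [show r (k+2) = (1 - 2*X) * r (k+1) + X * r k from rfl]
    simp [map_add, map_mul, map_sub, map_one, aeval_X, map_ofNat]
  · exact hn
  · simpa [map_ofNat] using ht
end

section
/- For all natural numbers n ≥ 2 and 1 ≤ j ≤ n, the polynomial H n j := X^(j−1) · (1 + 2·X) · r (n−j) + (−1)^j · (r j − r (j−1)) · (r n + 2·X · r (n−1)) is divisible by r n − r (n−1) in ℤ[X]. -/
open Polynomial

/-- The polynomial `H n j` of the divisibility lemma. -/
noncomputable def H (n j : ℕ) : Polynomial ℤ :=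
  X ^ (j - 1) * (1 + 2 * X) * r (n - j) +
    (-1) ^ j * (r j - r (j - 1)) * (r n + 2 * X * r (n - 1))

lemma r_rec (k : ℕ) : r (k + 2) = (1 - 2 * X) * r (k + 1) + X * r k := rfl

/-- Two-term recurrence for `H n ·`. -/
lemma H_rec (n m t : ℕ) (hn : n = m + 3 + t) :
    H n (m + 3) = -(1 - 2 * X) * H n (m + 2) + X * H n (m + 1) := by
  subst hn
  have h1 : m + 3 + t - (m + 3) = t := by omega
  have h2 : m + 3 + t - (m + 2) = t + 1 := by omega
  have h3 : m + 3 + t - (m + 1) = t + 2 := by omega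
  have h4 : m + 3 + t - 1 = m + 2 + t := by omega
  have h5 : m + 3 - 1 = m + 2 := by omega
  have h6 : m + 2 - 1 = m + 1 := by omega
  have h7 : m + 1 - 1 = m := by omega
  simp only [H, h1, h2, h3, h4, h5, h6, h7]
  rw [r_rec (m + 1), r_rec m, r_rec t]
  ring

lemma H_one (n : ℕ) : H n 1 = -(r n - r (n - 1)) := by
  simp only [H, Nat.sub_self]
  rw [show r 1 - r 0 = 1 by simp [r]]
  ring

lemma H_two (n : ℕ) (hn : 2 ≤ n) : H n 2 = r n - r (n - 1) := by
  obtain ⟨s, rfl⟩ : ∃ s, n = s + 2 := ⟨n - 2, by omega⟩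
  have h1 : s + 2 - 2 = s := by omega
  have h2 : s + 2 - 1 = s + 1 := by omega
  have h3 : (2:ℕ) - 1 = 1 := by omega
  simp only [H, h1, h2, h3]
  rw [r_rec s, show r 2 = (1 - 2 * X) * r 1 + X * r 0 from rfl,
    show r 1 = (1:Polynomial ℤ) from rfl, show r 0 = (0:Polynomial ℤ) from rfl]
  ring

/-- For `n ≥ 2` and `1 ≤ j ≤ n`, the polynomial `H n j` is divisible by
`r n - r (n-1)` in `ℤ[X]`. -/
theorem rn_sub_dvd_H (n j : ℕ) (hn : 2 ≤ n) (hj : 1 ≤ j) (hjn : j ≤ n) :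
    (r n - r (n - 1)) ∣ H n j := by
  induction j using Nat.strong_induction_on with
  | _ j ih =>
    match j, hj, hjn with
    | 1, _, _ => exact ⟨-1, by rw [H_one n]; ring⟩
    | 2, _, _ => exact ⟨1, by rw [H_two n hn]; ring⟩
    | (m + 3), _, hjn =>
      rw [H_rec n m (n - (m + 3)) (by omega)]
      exact dvd_add
        (Dvd.dvd.mul_left (ih (m + 2) (by omega) (by omega) (by omega)) _)
        (Dvd.dvd.mul_left (ih (m + 1) (by omega) (by omega) (by omega)) _)
end

section
/- The quotient H n j / (r n − r (n−1)) depends only on j: for all natural numbers n, m ≥ 2 and every j with 1 ≤ j ≤ n and 1 ≤ j ≤ m, one has H n j · (r m − r (m−1)) = H m j · (r n − r (n−1)) in ℤ[X]. -/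
open Polynomial

lemma cassini (i : ℕ) : r i * r (i + 2) - r (i + 1) ^ 2 = (-1) ^ (i + 1) * X ^ i := by
  induction i with
  | zero => simp [r]
  | succ i ih =>
    have h3 : r (i + 1 + 2) = (1 - 2 * X) * r (i + 2) + X * r (i + 1) := rfl
    have h2 : r (i + 2) = (1 - 2 * X) * r (i + 1) + X * r i := rfl
    rw [h3, h2]; rw [h2] at ih
    linear_combination (-X) * ih

lemma Hdef (i k : ℕ) : H (i + 1 + k) (i + 1) =
    X ^ i * (1 + 2 * X) * r k +
      (-1) ^ (i + 1) * (r (i + 1) - r i) * (r (i + 1 + k) + 2 * X * r (i + k)) := by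
  have e1 : i + 1 - 1 = i := rfl
  have e2 : i + 1 + k - (i + 1) = k := by omega
  have e3 : i + 1 + k - 1 = i + k := by omega
  rw [H, e1, e2, e3]

lemma key (i k : ℕ) : H (i + 1 + k) (i + 1) =
    (-1) ^ (i + 1) * (r (i + 1) + 2 * X * r i) * (r (i + 1 + k) - r (i + k)) := by
  induction k using Nat.twoStepInduction with
  | zero =>
    rw [Hdef]
    have : r 0 = 0 := rfl
    rw [this]
    ring_nf
  | one =>
    rw [Hdef]
    have h1 : r 1 = 1 := rfl
    have h2 : r (i + 1 + 1) = (1 - 2 * X) * r (i + 1) + X * r i := rfl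
    have hc := cassini i
    rw [h2] at hc
    have hsq : (-1 : Polynomial ℤ) ^ (i + 1) * (-1) ^ (i + 1) = 1 := by
      rw [← pow_add]
      exact Even.neg_one_pow ⟨i + 1, by ring⟩
    rw [h1, h2]
    linear_combination (-(-1 : Polynomial ℤ) ^ (i + 1) * (1 + 2 * X)) * hc +
      (-(X ^ i * (1 + 2 * X))) * hsq
  | more k ih0 ih1 =>
    rw [Hdef] at *
    have hk : r (k + 2) = (1 - 2 * X) * r (k + 1) + X * r k := rfl
    have hn2 : r (i + 1 + (k + 2)) = (1 - 2 * X) * r (i + 1 + (k + 1)) + X * r (i + 1 + k) := by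
      have : i + 1 + (k + 2) = (i + 1 + k) + 2 := by ring
      rw [this]; rfl
    have hn1 : r (i + 1 + (k + 1)) = (1 - 2 * X) * r (i + 1 + k) + X * r (i + k) := by
      have : i + 1 + (k + 1) = (i + k) + 2 := by ring
      rw [this]
      have : i + 1 + k = i + k + 1 := by ring
      rw [this]; rfl
    have e1 : i + (k + 2) = i + 1 + (k + 1) := by ring
    have e2 : i + (k + 1) = i + 1 + k := by ring
    rw [e1, hk, hn2, hn1]
    rw [e2, hn1] at ih1
    linear_combination (1 - 2 * X) * ih1 + X * ih0

/-- The quotient `H n j / (r n - r (n-1))` depends only on `j`. -/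
theorem H_quotient_depends_only_on_j (n m j : ℕ) (hn : 2 ≤ n) (hm : 2 ≤ m)
    (hj : 1 ≤ j) (hjn : j ≤ n) (hjm : j ≤ m) :
    H n j * (r m - r (m - 1)) = H m j * (r n - r (n - 1)) := by
  obtain ⟨i, rfl⟩ : ∃ i, j = i + 1 := ⟨j - 1, by omega⟩
  obtain ⟨k, rfl⟩ : ∃ k, n = i + 1 + k := ⟨n - (i + 1), by omega⟩
  obtain ⟨l, rfl⟩ : ∃ l, m = i + 1 + l := ⟨m - (i + 1), by omega⟩
  have en : i + 1 + k - 1 = i + k := by omega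
  have em : i + 1 + l - 1 = i + l := by omega
  rw [en, em, key i k, key i l]
  ring
end

section
/- For every natural number k, the evaluation of r k at −1/2 equals (A^k − B^k) / (√2 · 2^k), where A = 2 + √2 and B = 2 − √2. -/
open Polynomial

noncomputable def A : ℝ := 2 + Real.sqrt 2
noncomputable def B : ℝ := 2 - Real.sqrt 2

/-- The evaluation of `r k` at `-1/2` equals `(A^k - B^k)/(√2 · 2^k)`. -/
theorem r_eval_neg_half (k : ℕ) :
    (Polynomial.aeval (-1 / 2 : ℝ) (r k)) = (A ^ k - B ^ k) / (Real.sqrt 2 * 2 ^ k) := by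
  have hs : Real.sqrt 2 ^ 2 = 2 := Real.sq_sqrt (by norm_num)
  have hs0 : Real.sqrt 2 ≠ 0 := by positivity
  induction k using Nat.twoStepInduction with
  | zero => simp [r]
  | one =>
      simp only [r, pow_one, map_one]
      rw [A, B]
      field_simp
      ring
  | more n ih1 ih2 =>
      have hr : r (n + 2) = (1 - 2 * X) * r (n + 1) + X * r n := rfl
      rw [hr]
      simp only [map_add, map_mul, map_sub, map_one, map_ofNat, aeval_X]
      rw [ih1, ih2]
      have hA2 : A ^ 2 = 4 * A - 2 := by rw [A]; nlinarith [hs]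
      have hB2 : B ^ 2 = 4 * B - 2 := by rw [B]; nlinarith [hs]
      have hA : A ^ (n + 2) = (4 * A - 2) * A ^ n := by rw [← hA2]; ring
      have hB : B ^ (n + 2) = (4 * B - 2) * B ^ n := by rw [← hB2]; ring
      rw [hA, hB]
      have h2 : (2:ℝ) ^ (n+1) = 2 * 2 ^ n := by ring
      have h22 : (2:ℝ) ^ (n+2) = 4 * 2 ^ n := by ring
      rw [h2, h22, pow_succ A, pow_succ B]
      field_simp
      ring
end

section
/- For all natural numbers n ≥ 2 and 1 ≤ j ≤ n, and every complex number t with |t| = 1/2 such that r n t + 2t · r (n−1) t ≠ 0 and r n t − r (n−1) t ≠ 0, the squared modulus |r (n−j) t / (r n t + 2t · r (n−1) t)|², viewed as a complex number, equals (−1)^j · 2^j · t^j · (r (n−j) t)² / ((r n t + 2t · r (n−1) t) · (r n t − r (n−1) t)). (This expresses |g_j^{(n)}(t)|² on the circle |t| = 1/2 as a rational function of t, using that t̄ = 1/(4t) there.) -/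
open Polynomial

lemma aeval_r_two (x : ℂ) (k : ℕ) :
    aeval x (r (k + 2)) = (1 - 2 * x) * aeval x (r (k + 1)) + x * aeval x (r k) := by
  simp only [r, map_add, map_mul, map_one, map_sub, aeval_X, map_ofNat]

lemma conj_aeval (t : ℂ) (p : Polynomial ℤ) :
    (starRingEnd ℂ) (aeval t p) = aeval ((starRingEnd ℂ) t) p := by
  rw [aeval_def, aeval_def, hom_eval₂]
  congr 1
  exact RingHom.ext_int _ _

lemma key_s19 (t : ℂ) (h : t * (starRingEnd ℂ) t = 1 / 4) :
    ∀ k, (-2 * t) ^ k * aeval ((starRingEnd ℂ) t) (r (k + 1)) = aeval t (r (k + 1)) := by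
  intro k
  induction k using Nat.twoStepInduction with
  | zero => simp [r]
  | one =>
    rw [aeval_r_two, aeval_r_two]
    simp only [r]
    simp only [map_zero, map_one]
    linear_combination 4 * h
  | more k ih1 ih2 =>
    rw [aeval_r_two ((starRingEnd ℂ) t) (k+1), aeval_r_two t (k+1)]
    rw [← ih1, ← ih2]
    linear_combination ((-2*t)^k * (-8*t* aeval ((starRingEnd ℂ) t) (r (k+1+1))
      + 4*t* aeval ((starRingEnd ℂ) t) (r (k+1)))) * h

/-- On the circle `|t| = 1/2`, the squared modulus of
`g_j^{(n)}(t) = r_{n-j}(t) / (r_n(t) + 2t r_{n-1}(t))` equals the rational function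
`(-1)^j 2^j t^j r_{n-j}(t)² / ((r_n(t) + 2t r_{n-1}(t))(r_n(t) - r_{n-1}(t)))`. -/
theorem sq_abs_g_eq (n j : ℕ) (hn : 2 ≤ n) (hj : 1 ≤ j) (hjn : j ≤ n) (t : ℂ)
    (ht : ‖t‖ = 1 / 2)
    (h1 : Polynomial.aeval t (r n) + 2 * t * Polynomial.aeval t (r (n - 1)) ≠ 0)
    (h2 : Polynomial.aeval t (r n) - Polynomial.aeval t (r (n - 1)) ≠ 0) :
    ((‖Polynomial.aeval t (r (n - j)) /
        (Polynomial.aeval t (r n) + 2 * t * Polynomial.aeval t (r (n - 1)))‖ ^ 2 : ℝ) : ℂ) =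
      (-1) ^ j * 2 ^ j * t ^ j * (Polynomial.aeval t (r (n - j))) ^ 2 /
        ((Polynomial.aeval t (r n) + 2 * t * Polynomial.aeval t (r (n - 1))) *
          (Polynomial.aeval t (r n) - Polynomial.aeval t (r (n - 1)))) := by
  have ht0 : t ≠ 0 := by
    intro h; rw [h] at ht; simp at ht
  have hts : t * (starRingEnd ℂ) t = 1 / 4 := by
    rw [Complex.mul_conj]
    rw [Complex.normSq_eq_norm_sq, ht]
    norm_num
  rw [Complex.sq_norm, ← Complex.mul_conj]
  rcases lt_or_eq_of_le hjn with hlt | rfl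
  · -- j < n
    obtain ⟨p, rfl⟩ : ∃ p, n = p + 2 := ⟨n - 2, by omega⟩
    obtain ⟨m, hm⟩ : ∃ m, p + 2 - j = m + 1 := ⟨p + 1 - j, by omega⟩
    have hjm : p + 1 = j + m := by omega
    rw [show p + 2 - 1 = p + 1 from rfl] at h1 h2 ⊢
    rw [hm]
    set s := (starRingEnd ℂ) t with hs
    have hA : (-2 * t) ^ m * aeval s (r (m + 1)) = aeval t (r (m + 1)) := key_s19 t hts m
    have hB : (-2 * t) ^ (p + 1) * aeval s (r (p + 2)) = aeval t (r (p + 2)) :=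
      key_s19 t hts (p + 1)
    have hC : (-2 * t) ^ p * aeval s (r (p + 1)) = aeval t (r (p + 1)) := key_s19 t hts p
    have hpow0 : (-2 * t) ≠ 0 := by simp [ht0]
    have hden : (aeval s (r (p + 2)) + 2 * s * aeval s (r (p + 1))) * (-2 * t) ^ (p + 1)
        = aeval t (r (p + 2)) - aeval t (r (p + 1)) := by
      linear_combination hB - 4 * t * s * hC - 4 * (aeval t (r (p + 1))) * hts
    have hA' : aeval s (r (m + 1)) = aeval t (r (m + 1)) / (-2 * t) ^ m := by
      rw [eq_div_iff (pow_ne_zero _ hpow0)]; linear_combination hA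
    have hden' : aeval s (r (p + 2)) + 2 * s * aeval s (r (p + 1))
        = (aeval t (r (p + 2)) - aeval t (r (p + 1))) / (-2 * t) ^ (p + 1) := by
      rw [eq_div_iff (pow_ne_zero _ hpow0)]; exact hden
    rw [map_div₀, map_add, map_mul, map_mul, conj_aeval, conj_aeval, conj_aeval, ← hs]
    rw [Complex.conj_ofNat]
    rw [hA', hden']
    have hpowj : ((-1 : ℂ)) ^ j * 2 ^ j * t ^ j = (-2 * t) ^ j := by
      rw [← mul_pow, ← mul_pow]; norm_num
    rw [hpowj, show ((-2 * t : ℂ)) ^ (p + 1) = (-2 * t) ^ j * (-2 * t) ^ m by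
      rw [← pow_add, ← hjm]]
    have e1 : ((-2 * t : ℂ)) ^ m ≠ 0 := pow_ne_zero _ hpow0
    have e2 : ((-2 * t : ℂ)) ^ j ≠ 0 := pow_ne_zero _ hpow0
    field_simp
  · -- j = n
    rw [Nat.sub_self]
    simp [r]
end
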